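/- For every k ∈ ℕ, TPTL_{k+1} is strictly more expressive than TPTL_k: the formula φ[k+1], defined by φ[1] = p ∧ X p and φ[m+1] = p ∧ X φ[m], is expressible with until rank k+1 but is not equivalent to any TPTL formula of until rank at most k. -/

import Mathlib

/-- Integers extended with `-∞` (`⊥`) and `+∞` (`⊤`), used as interval endpoints. -/
abbrev XEInt := WithBot (WithTop ℤ)

def XEInt.ofInt (n : ℤ) : XEInt := ((n : WithTop ℤ) : XEInt)

/-- An interval of integers, given by two (possibly infinite) endpoints and
openness flags. -/
structure Iv where
  lo : XEInt
  hi : XEInt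
  loOpen : Bool
  hiOpen : Bool

/-- Membership of an integer in an interval. -/
def Iv.mem (I : Iv) (d : ℤ) : Prop :=
  (if I.loOpen then I.lo < XEInt.ofInt d else I.lo ≤ XEInt.ofInt d) ∧
  (if I.hiOpen then XEInt.ofInt d < I.hi else XEInt.ofInt d ≤ I.hi)

/-- The interval `(-∞, +∞)`. -/
def Iv.univ : Iv := ⟨⊥, ⊤, true, true⟩

/-- The singleton interval `[n, n]`. -/
def Iv.pt (n : ℤ) : Iv := ⟨XEInt.ofInt n, XEInt.ofInt n, false, false⟩

/-- A data word: an infinite sequence of pairs of a set of propositions and a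
natural number data value. -/
abbrev DataWord (P : Type) := ℕ → (Set P) × ℕ

/-- Syntax of MTL: atoms, negation, conjunction, and interval-constrained
strict until. -/
inductive MTL (P : Type) where
  | atom : P → MTL P
  | neg  : MTL P → MTL P
  | and  : MTL P → MTL P → MTL P
  | untl : MTL P → Iv → MTL P → MTL P

/-- Satisfaction of an MTL formula at position `i` of data word `w`. -/
def MTL.sat {P : Type} (w : DataWord P) : ℕ → MTL P → Prop
  | i, .atom p => p ∈ (w i).1
  | i, .neg φ => ¬ MTL.sat w i φ
  | i, .and φ ψ => MTL.sat w i φ ∧ MTL.sat w i ψ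
  | i, .untl φ I ψ => ∃ j, i < j ∧ MTL.sat w j ψ ∧
      I.mem (((w j).2 : ℤ) - ((w i).2 : ℤ)) ∧
      ∀ k, i < k → k < j → MTL.sat w k φ

/-- A data word satisfies an MTL formula if it holds at position `0`. -/
def MTL.models {P : Type} (w : DataWord P) (φ : MTL P) : Prop := MTL.sat w 0 φ

/-- The until rank of an MTL formula. -/
def MTL.urk {P : Type} : MTL P → ℕ
  | .atom _ => 0
  | .neg φ => φ.urk
  | .and φ ψ => max φ.urk ψ.urk
  | .untl φ _ ψ => max φ.urk ψ.urk + 1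

/-- All interval endpoints of until operators in the formula lie in `S`. -/
def MTL.endpointsIn {P : Type} : MTL P → Set XEInt → Prop
  | .atom _, _ => True
  | .neg φ, S => φ.endpointsIn S
  | .and φ ψ, S => φ.endpointsIn S ∧ ψ.endpointsIn S
  | .untl φ I ψ, S => I.lo ∈ S ∧ I.hi ∈ S ∧ φ.endpointsIn S ∧ ψ.endpointsIn S

/-- Syntax of TPTL: atoms, register constraints, negation, conjunction,
strict until, and the freeze quantifier. -/
inductive TPTL (P V : Type) where
  | atom : P → TPTL P V
  | cstr : V → Iv → TPTL P V
  | neg : TPTL P V → TPTL P V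
  | and : TPTL P V → TPTL P V → TPTL P V
  | untl : TPTL P V → TPTL P V → TPTL P V
  | freeze : V → TPTL P V → TPTL P V

/-- Satisfaction of a TPTL formula at position `i` of data word `w` under the
register valuation `ν`. -/
def TPTL.sat {P V : Type} [DecidableEq V] (w : DataWord P) :
    ℕ → (V → ℕ) → TPTL P V → Prop
  | i, _, .atom p => p ∈ (w i).1
  | i, ν, .cstr x I => I.mem (((w i).2 : ℤ) - (ν x : ℤ))
  | i, ν, .neg φ => ¬ TPTL.sat w i ν φ
  | i, ν, .and φ ψ => TPTL.sat w i ν φ ∧ TPTL.sat w i ν ψ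
  | i, ν, .untl φ ψ => ∃ j, i < j ∧ TPTL.sat w j ν ψ ∧
      ∀ k, i < k → k < j → TPTL.sat w k ν φ
  | i, ν, .freeze x φ => TPTL.sat w i (Function.update ν x (w i).2) φ

/-- A data word satisfies a TPTL formula if it holds at position `0` under the
valuation mapping every register to the first data value. -/
def TPTL.models {P V : Type} [DecidableEq V] (w : DataWord P) (φ : TPTL P V) : Prop :=
  TPTL.sat w 0 (fun _ => (w 0).2) φ

/-- The until rank of a TPTL formula. -/
def TPTL.urk {P V : Type} : TPTL P V → ℕ
  | .atom _ => 0
  | .cstr _ _ => 0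
  | .neg φ => φ.urk
  | .and φ ψ => max φ.urk ψ.urk
  | .untl φ ψ => max φ.urk ψ.urk + 1
  | .freeze _ φ => φ.urk

/-- All register constraints in the formula are equality tests `x ∈ [0,0]`. -/
def TPTL.eqOnly {P V : Type} : TPTL P V → Prop
  | .atom _ => True
  | .cstr _ I => I = Iv.pt 0
  | .neg φ => φ.eqOnly
  | .and φ ψ => φ.eqOnly ∧ ψ.eqOnly
  | .untl φ ψ => φ.eqOnly ∧ ψ.eqOnly
  | .freeze _ φ => φ.eqOnly

/-- All endpoints of intervals in register constraints lie in `S`. -/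
def TPTL.cstrIn {P V : Type} : TPTL P V → Set XEInt → Prop
  | .atom _, _ => True
  | .cstr _ I, S => I.lo ∈ S ∧ I.hi ∈ S
  | .neg φ, S => φ.cstrIn S
  | .and φ ψ, S => φ.cstrIn S ∧ ψ.cstrIn S
  | .untl φ ψ, S => φ.cstrIn S ∧ ψ.cstrIn S
  | .freeze _ φ, S => φ.cstrIn S

/-- A TPTL falsity constant over `Bool`. -/
def tff : TPTL Bool ℕ := .and (.atom true) (.neg (.atom true))

/-- The next operator `X φ := false U φ`. -/
def tX (φ : TPTL Bool ℕ) : TPTL Bool ℕ := .untl tff φ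

/-- `tphiU k` is the TPTL rendering of `φ[k+1]`: `φ[1] = p ∧ X p`,
`φ[m+1] = p ∧ X φ[m]`, with `p` the atom `true`. -/
def tphiU : ℕ → TPTL Bool ℕ
  | 0 => .and (.atom true) (tX (.atom true))
  | m + 1 => .and (.atom true) (tX (tphiU m))

/-- The word with `p` true exactly on positions `< m`, all data values `0`. -/
def Wrd (m : ℕ) : DataWord Bool := fun i => (if i < m then Set.univ else ∅, 0)

lemma transfer (ψ : TPTL Bool ℕ) :
    ∀ (r m n i i' : ℕ) (ν : ℕ → ℕ), ψ.urk ≤ r →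
      min (m - i) (r + 1) = min (n - i') (r + 1) →
      (TPTL.sat (Wrd m) i ν ψ ↔ TPTL.sat (Wrd n) i' ν ψ) := by
  induction ψ with
  | atom p =>
    intro r m n i i' ν hr h
    simp only [TPTL.sat, Wrd]
    split_ifs with a b b <;> simp <;> omega
  | cstr x I =>
    intro r m n i i' ν hr h
    simp only [TPTL.sat, Wrd]
  | neg φ ih =>
    intro r m n i i' ν hr h
    simp only [TPTL.sat]
    exact not_congr (ih r m n i i' ν hr h)
  | and φ₁ φ₂ ih₁ ih₂ =>
    intro r m n i i' ν hr h
    simp only [TPTL.urk] at hr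
    simp only [TPTL.sat]
    exact and_congr (ih₁ r m n i i' ν (by omega) h) (ih₂ r m n i i' ν (by omega) h)
  | freeze x φ ih =>
    intro r m n i i' ν hr h
    simp only [TPTL.sat, Wrd]
    exact ih r m n i i' _ hr h
  | untl φ₁ φ₂ ih₁ ih₂ =>
    intro r m n i i' ν hr h
    simp only [TPTL.urk] at hr
    have hr1 : 1 ≤ r := by omega
    have h1r : φ₁.urk ≤ r - 1 := by omega
    have h2r : φ₂.urk ≤ r - 1 := by omega
    have hrr : r - 1 + 1 = r := by omega
    have key : ∀ m n i i', min (m - i) (r + 1) = min (n - i') (r + 1) →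
        TPTL.sat (Wrd m) i ν (.untl φ₁ φ₂) → TPTL.sat (Wrd n) i' ν (.untl φ₁ φ₂) := by
      intro m n i i' h hs
      obtain ⟨j, hij, h2, hall⟩ := hs
      by_cases hc : min (m - i) (r + 1) ≤ r
      · -- distances agree exactly
        have hmn : m - i = n - i' := by omega
        refine ⟨i' + (j - i), by omega, ?_, ?_⟩
        · exact (ih₂ (r - 1) m n j (i' + (j - i)) ν h2r (by rw [hrr]; omega)).mp h2
        · intro kk hk1 hk2
          have hb := hall (i + (kk - i')) (by omega) (by omega)
          exact (ih₁ (r - 1) m n (i + (kk - i')) kk ν h1r (by rw [hrr]; omega)).mp hb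
      · -- both far: m - i ≥ r+1, n - i' ≥ r+1
        by_cases hj : r ≤ m - j
        · refine ⟨i' + 1, by omega, ?_, ?_⟩
          · exact (ih₂ (r - 1) m n j (i' + 1) ν h2r (by rw [hrr]; omega)).mp h2
          · intro kk hk1 hk2
            exact absurd hk2 (by omega)
        · refine ⟨n - (m - j), by omega, ?_, ?_⟩
          · exact (ih₂ (r - 1) m n j (n - (m - j)) ν h2r (by rw [hrr]; omega)).mp h2
          · intro kk hk1 hk2
            by_cases hd : n - kk ≤ r - 1
            · have hb := hall (m - (n - kk)) (by omega) (by omega)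
              exact (ih₁ (r - 1) m n (m - (n - kk)) kk ν h1r (by rw [hrr]; omega)).mp hb
            · have hb := hall (i + 1) (by omega) (by omega)
              exact (ih₁ (r - 1) m n (i + 1) kk ν h1r (by rw [hrr]; omega)).mp hb
    exact ⟨key m n i i' h, key n m i' i h.symm⟩

lemma tX_sat (w : DataWord Bool) (i : ℕ) (ν : ℕ → ℕ) (φ : TPTL Bool ℕ) :
    TPTL.sat w i ν (tX φ) ↔ TPTL.sat w (i + 1) ν φ := by
  simp only [tX, TPTL.sat]
  constructor
  · rintro ⟨j, hij, hj, hall⟩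
    have hji : j = i + 1 := by
      by_contra hne
      have hb := hall (i + 1) (by omega) (by omega)
      simp [tff, TPTL.sat] at hb
    subst hji; exact hj
  · intro hφ
    exact ⟨i + 1, by omega, hφ, fun kk h1 h2 => absurd h2 (by omega)⟩

lemma phi_char : ∀ (kk i : ℕ) (ν : ℕ → ℕ) (m : ℕ),
    TPTL.sat (Wrd m) i ν (tphiU kk) ↔ i + kk + 1 < m := by
  intro kk
  induction kk with
  | zero =>
    intro i ν m
    rw [show TPTL.sat (Wrd m) i ν (tphiU 0) ↔
        (TPTL.sat (Wrd m) i ν (.atom true) ∧ TPTL.sat (Wrd m) i ν (tX (.atom true)))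
        from Iff.rfl, tX_sat]
    simp only [TPTL.sat, Wrd]
    split_ifs <;> simp <;> omega
  | succ kk ih =>
    intro i ν m
    rw [show TPTL.sat (Wrd m) i ν (tphiU (kk + 1)) ↔
        (TPTL.sat (Wrd m) i ν (.atom true) ∧ TPTL.sat (Wrd m) i ν (tX (tphiU kk)))
        from Iff.rfl, tX_sat, ih]
    simp only [TPTL.sat, Wrd]
    split_ifs <;> simp <;> omega

lemma urk_tphiU : ∀ k, TPTL.urk (tphiU k) = k + 1 := by
  intro k
  induction k with
  | zero => simp [tphiU, tX, tff, TPTL.urk]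
  | succ k ih => simp [tphiU, tX, tff, TPTL.urk, ih]

/-- The until hierarchy of TPTL is strict: `φ[k+1]` is expressible with until
rank `k+1` but is not equivalent to any TPTL formula of until rank at most
`k`. -/
theorem tptl_until_hierarchy (k : ℕ) :
    TPTL.urk (tphiU k) = k + 1 ∧
    ¬ ∃ ψ : TPTL Bool ℕ, TPTL.urk ψ ≤ k ∧
        ∀ w : DataWord Bool, TPTL.models w ψ ↔ TPTL.models w (tphiU k) := by
  refine ⟨urk_tphiU k, ?_⟩
  rintro ⟨ψ, hrk, heq⟩
  have h1 : TPTL.models (Wrd (k + 2)) (tphiU k) := by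
    simp only [TPTL.models]
    rw [phi_char]; omega
  have h2 : TPTL.models (Wrd (k + 2)) ψ := (heq (Wrd (k + 2))).mpr h1
  have h3 : TPTL.models (Wrd (k + 1)) ψ := by
    have ht := transfer ψ k (k + 2) (k + 1) 0 0 (fun _ => 0) hrk (by omega)
    simp only [TPTL.models, Wrd] at h2 ⊢
    exact ht.mp h2
  have h4 := (heq (Wrd (k + 1))).mp h3
  rw [TPTL.models, phi_char] at h4
  omega
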